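/- Let C : [0,1] → ℝ² be the constant curve C(x) = p for all x, where ‖p‖ > ε > 0. Then every proof set P for the nearest-point problem with tolerance ε satisfies: any two consecutive elements of P differ by at most 2ε, and hence |P| ≥ 1/(2ε). -/

import Mathlib

noncomputable def closestPossible (C : ℝ → EuclideanSpace ℝ (Fin 2)) (a b : ℝ) : ℝ :=
  sInf ((fun p => ‖p‖) '' {p : EuclideanSpace ℝ (Fin 2) | ‖C a - p‖ + ‖C b - p‖ ≤ b - a})

lemma closestPossible_const_le (p : EuclideanSpace ℝ (Fin 2)) (hp : 0 < ‖p‖)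
    (C : ℝ → EuclideanSpace ℝ (Fin 2)) (hC : ∀ x, C x = p) (a b : ℝ) (hab : 0 ≤ b - a) :
    closestPossible C a b ≤ ‖p‖ - min ((b - a) / 2) ‖p‖ := by
  set d := b - a with hd
  set t : ℝ := min (d / (2 * ‖p‖)) 1 with ht
  have ht0 : 0 ≤ t := le_min (by positivity) one_pos.le
  have ht1 : t ≤ 1 := min_le_right _ _
  set q : EuclideanSpace ℝ (Fin 2) := (1 - t) • p with hq
  have hpq : p - q = t • p := by
    rw [hq]
    rw [← one_smul ℝ p, smul_smul, ← sub_smul]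
    ring_nf
    rw [one_smul]
  have hnormpq : ‖p - q‖ = min (d / 2) ‖p‖ := by
    rw [hpq, norm_smul, Real.norm_eq_abs, abs_of_nonneg ht0, ht,
      min_mul_of_nonneg _ _ hp.le, one_mul]
    congr 1
    field_simp
  have hmem : q ∈ {q : EuclideanSpace ℝ (Fin 2) | ‖C a - q‖ + ‖C b - q‖ ≤ b - a} := by
    simp only [Set.mem_setOf_eq, hC]
    rw [hnormpq, ← hd]
    have : min (d / 2) ‖p‖ ≤ d / 2 := min_le_left _ _
    linarith
  have hbdd : BddBelow ((fun p => ‖p‖) '' {p : EuclideanSpace ℝ (Fin 2) | ‖C a - p‖ + ‖C b - p‖ ≤ b - a}) := by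
    refine ⟨0, ?_⟩
    rintro y ⟨z, _, rfl⟩
    exact norm_nonneg z
  have hle : closestPossible C a b ≤ ‖q‖ := csInf_le hbdd ⟨q, hmem, rfl⟩
  have hnq : ‖q‖ = ‖p‖ - min (d / 2) ‖p‖ := by
    have : ‖q‖ = (1 - t) * ‖p‖ := by
      rw [hq, norm_smul, Real.norm_eq_abs, abs_of_nonneg (by linarith)]
    rw [this]
    have h2 : t * ‖p‖ = min (d / 2) ‖p‖ := by
      rw [ht, min_mul_of_nonneg _ _ hp.le, one_mul]
      congr 1
      field_simp
    nlinarith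
  rw [hnq] at hle
  exact hle

theorem stmt_18 (p : EuclideanSpace ℝ (Fin 2)) (ε : ℝ) (hε : 0 < ε) (hp : ‖p‖ > ε)
    (C : ℝ → EuclideanSpace ℝ (Fin 2)) (hC : ∀ x, C x = p)
    (n : ℕ) (x : Fin (n + 1) → ℝ) (hmono : StrictMono x)
    (hx0 : x 0 = 0) (hxn : x (Fin.last n) = 1)
    (hproof : ∀ i : Fin n, (⨅ j : Fin (n + 1), ‖C (x j)‖) - ε ≤
      closestPossible C (x i.castSucc) (x i.succ)) :
    (∀ i : Fin n, x i.succ - x i.castSucc ≤ 2 * ε) ∧ (1 / (2 * ε) ≤ (n + 1 : ℝ)) := by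
  have hp0 : 0 < ‖p‖ := lt_trans hε hp
  have hinf : (⨅ j : Fin (n + 1), ‖C (x j)‖) = ‖p‖ := by
    simp [hC]
  have hgap : ∀ i : Fin n, x i.succ - x i.castSucc ≤ 2 * ε := by
    intro i
    have h1 := hproof i
    rw [hinf] at h1
    have hab : 0 ≤ x i.succ - x i.castSucc :=
      sub_nonneg.mpr (hmono (Fin.castSucc_lt_succ : i.castSucc < i.succ)).le
    have h2 := closestPossible_const_le p hp0 C hC (x i.castSucc) (x i.succ) hab
    have h3 : min ((x i.succ - x i.castSucc) / 2) ‖p‖ ≤ ε := by linarith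
    rcases min_le_iff.mp (le_of_eq rfl : min ((x i.succ - x i.castSucc) / 2) ‖p‖ ≤ _) with _ | _
    · rcases le_or_gt ((x i.succ - x i.castSucc) / 2) ‖p‖ with h | h
      · rw [min_eq_left h] at h3; linarith
      · rw [min_eq_right h.le] at h3; linarith
    · rcases le_or_gt ((x i.succ - x i.castSucc) / 2) ‖p‖ with h | h
      · rw [min_eq_left h] at h3; linarith
      · rw [min_eq_right h.le] at h3; linarith
  refine ⟨hgap, ?_⟩
  -- telescoping sum
  set f : ℕ → ℝ := fun k => x ⟨min k n, Nat.lt_succ_of_le (min_le_right _ _)⟩ with hf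
  have hsum : ∑ i ∈ Finset.range n, (f (i + 1) - f i) = f n - f 0 :=
    Finset.sum_range_sub f n
  have hf0 : f 0 = 0 := by
    rw [hf]; simpa using hx0
  have hfn : f n = 1 := by
    have : (⟨min n n, Nat.lt_succ_of_le (min_le_right _ _)⟩ : Fin (n+1)) = Fin.last n :=
      Fin.ext (by simp)
    rw [hf]
    simp only [this]
    exact hxn
  have hterm : ∀ i ∈ Finset.range n, f (i + 1) - f i ≤ 2 * ε := by
    intro i hi
    rw [Finset.mem_range] at hi
    have e1 : f (i + 1) = x (⟨i, hi⟩ : Fin n).succ := by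
      rw [hf]
      exact congrArg x (Fin.ext (by simp [Nat.min_eq_left]; omega))
    have e2 : f i = x (⟨i, hi⟩ : Fin n).castSucc := by
      rw [hf]
      exact congrArg x (Fin.ext (by simp [Nat.min_eq_left]; omega))
    rw [e1, e2]
    exact hgap ⟨i, hi⟩
  have hsum_le : ∑ i ∈ Finset.range n, (f (i + 1) - f i) ≤ n * (2 * ε) := by
    calc ∑ i ∈ Finset.range n, (f (i + 1) - f i) ≤ ∑ _i ∈ Finset.range n, (2 * ε) :=
          Finset.sum_le_sum hterm
      _ = n * (2 * ε) := by simp [mul_comm]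
  have h1 : (1 : ℝ) ≤ n * (2 * ε) := by
    rw [hsum, hf0, hfn] at hsum_le
    linarith
  rw [div_le_iff₀ (by positivity)]
  nlinarith [Nat.cast_nonneg (α := ℝ) n]
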